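/- Suppose a solution of the HV–DVG system satisfies C(t*) = C_V(t*) = C_D(t*) = C_{DV}(t*) = 0 at some time t*, with initial data C(0) = C₀, C_V(0) = C_D(0) = C_{DV}(0) = 0, V(0) = V₀, D(0) = D₀. Then, with I_V = ∫₀^{t*} αC_V dt and I_{DV} = ∫₀^{t*} αC_{DV} dt, one has I_V + I_{DV} = C₀, V(t*) = V₀ − C₀ + η I_V + (η/κ) I_{DV}, and D(t*) = D₀ − C₀ + (βη + 1) I_V + (η/κ)(β + δ) I_{DV}. -/

import Mathlib

theorem stmt_11 (ι α η κ β δ : ℝ)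
    (hι : 0 < ι) (hα : 0 < α) (hη : 0 < η) (hκ : 0 < κ) (hβ : 0 < β) (hδ : 0 < δ)
    (C CV CD CDV V D : ℝ → ℝ) (tstar C0 V0 D0 : ℝ) (htstar : 0 ≤ tstar)
    (hC : ∀ t, HasDerivAt C (-(ι * C t * (V t + D t))) t)
    (hCV : ∀ t, HasDerivAt CV (ι * C t * V t - CV t * (ι * D t + α)) t)
    (hCD : ∀ t, HasDerivAt CD (ι * (C t * D t - CD t * V t)) t)
    (hCDV : ∀ t, HasDerivAt CDV (ι * (CD t * V t + CV t * D t) - α * CDV t) t)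
    (hV : ∀ t, HasDerivAt V (α * η * (CV t + CDV t / κ) - ι * V t * (C t + CD t)) t)
    (hD : ∀ t, HasDerivAt D
      (α * β * η * (CV t + CDV t / κ) + α * δ * η * (CDV t / κ) - ι * D t * (C t + CV t)) t)
    (hC0 : C 0 = C0) (hCV0 : CV 0 = 0) (hCD0 : CD 0 = 0) (hCDV0 : CDV 0 = 0)
    (hV0 : V 0 = V0) (hD0 : D 0 = D0)
    (hCt : C tstar = 0) (hCVt : CV tstar = 0) (hCDt : CD tstar = 0) (hCDVt : CDV tstar = 0) :
    (∫ t in (0:ℝ)..tstar, α * CV t) + (∫ t in (0:ℝ)..tstar, α * CDV t) = C0 ∧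
    V tstar = V0 - C0 + η * (∫ t in (0:ℝ)..tstar, α * CV t)
      + (η / κ) * (∫ t in (0:ℝ)..tstar, α * CDV t) ∧
    D tstar = D0 - C0 + (β * η + 1) * (∫ t in (0:ℝ)..tstar, α * CV t)
      + (η / κ) * (β + δ) * (∫ t in (0:ℝ)..tstar, α * CDV t) := by

  -- continuity of all functions
  have cC : Continuous C := continuous_iff_continuousAt.mpr fun t => (hC t).continuousAt
  have cCV : Continuous CV := continuous_iff_continuousAt.mpr fun t => (hCV t).continuousAt
  have cCD : Continuous CD := continuous_iff_continuousAt.mpr fun t => (hCD t).continuousAt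
  have cCDV : Continuous CDV := continuous_iff_continuousAt.mpr fun t => (hCDV t).continuousAt
  have cV : Continuous V := continuous_iff_continuousAt.mpr fun t => (hV t).continuousAt
  have cD : Continuous D := continuous_iff_continuousAt.mpr fun t => (hD t).continuousAt
  have i1 : IntervalIntegrable (fun t => α * CV t) MeasureTheory.volume 0 tstar :=
    (continuous_const.mul cCV).intervalIntegrable 0 tstar
  have i2 : IntervalIntegrable (fun t => α * CDV t) MeasureTheory.volume 0 tstar :=
    (continuous_const.mul cCDV).intervalIntegrable 0 tstar
  set IV := ∫ t in (0:ℝ)..tstar, α * CV t with hIV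
  set IDV := ∫ t in (0:ℝ)..tstar, α * CDV t with hIDV
  have hlin : ∀ a b : ℝ,
      (∫ t in (0:ℝ)..tstar, (a * (α * CV t) + b * (α * CDV t))) = a * IV + b * IDV := by
    intro a b
    have h1 : (∫ t in (0:ℝ)..tstar, a * (α * CV t)) = a * IV :=
      intervalIntegral.integral_const_mul a _
    have h2 : (∫ t in (0:ℝ)..tstar, b * (α * CDV t)) = b * IDV :=
      intervalIntegral.integral_const_mul b _
    rw [intervalIntegral.integral_add (i1.const_mul a) (i2.const_mul b), h1, h2]
  have ftc : ∀ (F : ℝ → ℝ) (a b : ℝ),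
      (∀ t, HasDerivAt F (a * (α * CV t) + b * (α * CDV t)) t) →
      F tstar - F 0 = a * IV + b * IDV := by
    intro F a b hF
    rw [← hlin a b]
    exact (intervalIntegral.integral_eq_sub_of_hasDerivAt (fun t _ => hF t)
      (((i1.const_mul a).add (i2.const_mul b)))).symm
  have e1 : (C tstar + CD tstar + CV tstar + CDV tstar) - (C 0 + CD 0 + CV 0 + CDV 0)
      = (-1) * IV + (-1) * IDV := by
    apply ftc
    intro t
    have h := (((hC t).add (hCD t)).add (hCV t)).add (hCDV t)
    convert h using 1
    · rfl
    · rfl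
    · rfl
    ring
  have e2 : (V tstar + CV tstar + CDV tstar) - (V 0 + CV 0 + CDV 0)
      = (η - 1) * IV + (η / κ - 1) * IDV := by
    apply ftc
    intro t
    have h := ((hV t).add (hCV t)).add (hCDV t)
    convert h using 1
    · rfl
    · rfl
    · rfl
    field_simp
    ring
  have e3 : (D tstar + CD tstar + CDV tstar) - (D 0 + CD 0 + CDV 0)
      = (β * η) * IV + ((η / κ) * (β + δ) - 1) * IDV := by
    apply ftc
    intro t
    have h := ((hD t).add (hCD t)).add (hCDV t)
    convert h using 1
    · rfl
    · rfl
    · rfl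
    field_simp
    ring
  simp only [hCt, hCVt, hCDt, hCDVt, hC0, hCV0, hCD0, hCDV0, hV0, hD0] at e1 e2 e3
  refine ⟨by linarith, by linarith, by linarith⟩
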